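/- Let N ≥ 1 and reals λ₁, λ₂, λ_N with λ_N ≤ λ₂ ≤ λ₁. Let λ : Fin N → ℝ satisfy λ 0 = λ₁, λ i ≤ λ₂ for all i ≠ 0, and λ_N ≤ λ i for all i. Then for every x, v ∈ EuclideanSpace ℝ (Fin N) with ‖x‖² = N, ‖v‖ = 1 and ⟨v, x⟩ = 0, writing m := (x 0)/√N, one has ∑ᵢ λ i·(v i)² − (1/N)·∑ᵢ λ i·(x i)² ≤ (λ₁ − λ_N) − (2λ₁ − λ₂ − λ_N)·m². -/

import Mathlib

set_option maxHeartbeats 1000000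


open scoped InnerProductSpace

/-- Local Bakry–Émery estimate (Lemma 3.9): the spherical Hessian of the Hamiltonian
`H(x) = (1/2) ∑ λᵢ xᵢ²` in a unit tangent direction `v` satisfies
`∑ λᵢ vᵢ² - (1/N) ∑ λᵢ xᵢ² ≤ (λ₁ - λ_N) - (2λ₁ - λ₂ - λ_N) m²` with `m = x₀/√N`. -/
theorem spherical_hessian_bound
    (N : ℕ) (hN : 0 < N) (lam₁ lam₂ lamN : ℝ)
    (h1 : lamN ≤ lam₂) (h2 : lam₂ ≤ lam₁)
    (lam : Fin N → ℝ) (hlam0 : lam ⟨0, hN⟩ = lam₁)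
    (hlam2 : ∀ i : Fin N, i ≠ ⟨0, hN⟩ → lam i ≤ lam₂)
    (hlamN : ∀ i : Fin N, lamN ≤ lam i)
    (x v : EuclideanSpace ℝ (Fin N))
    (hx : ‖x‖ ^ 2 = N) (hv : ‖v‖ = 1) (hvx : ⟪v, x⟫_ℝ = 0) :
    ∑ i, lam i * (v i) ^ 2 - (1 / N) * ∑ i, lam i * (x i) ^ 2
      ≤ (lam₁ - lamN) - (2 * lam₁ - lam₂ - lamN) * ((x ⟨0, hN⟩) / Real.sqrt N) ^ 2 := by
  set i0 : Fin N := ⟨0, hN⟩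
  set S : Finset (Fin N) := Finset.univ.erase i0 with hS
  have hNpos : (0:ℝ) < N := by exact_mod_cast hN
  -- norms as sums of squares
  have hxsum : ∑ i, (x i) ^ 2 = (N : ℝ) := by
    rw [← hx, EuclideanSpace.norm_eq]
    rw [Real.sq_sqrt (by positivity)]
    simp [sq_abs]
  have hvsum : ∑ i, (v i) ^ 2 = 1 := by
    have : ‖v‖ ^ 2 = 1 := by rw [hv]; norm_num
    rw [← this, EuclideanSpace.norm_eq, Real.sq_sqrt (by positivity)]
    simp [sq_abs]
  have hvxsum : ∑ i, v i * x i = 0 := by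
    rw [← hvx, PiLp.inner_apply]; simp [mul_comm]
  have hmem : i0 ∈ Finset.univ := Finset.mem_univ i0
  -- split sums
  have split : ∀ f : Fin N → ℝ, ∑ i, f i = f i0 + ∑ i ∈ S, f i := by
    intro f; rw [hS, Finset.add_sum_erase _ _ hmem]
  have hA : ∑ i ∈ S, (v i) ^ 2 = 1 - (v i0) ^ 2 := by
    have := split (fun i => (v i) ^ 2); rw [hvsum] at this; linarith
  have hB : ∑ i ∈ S, (x i) ^ 2 = (N : ℝ) - (x i0) ^ 2 := by
    have := split (fun i => (x i) ^ 2); rw [hxsum] at this; linarith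
  have hC : ∑ i ∈ S, v i * x i = - (v i0 * x i0) := by
    have := split (fun i => v i * x i); rw [hvxsum] at this; linarith
  have hAnn : (0:ℝ) ≤ 1 - (v i0) ^ 2 := by
    rw [← hA]; positivity
  have hBnn : (0:ℝ) ≤ (N : ℝ) - (x i0) ^ 2 := by
    rw [← hB]; positivity
  -- Cauchy-Schwarz on S
  have hCS : (v i0 * x i0) ^ 2 ≤ (1 - (v i0) ^ 2) * ((N : ℝ) - (x i0) ^ 2) := by
    have := Finset.sum_mul_sq_le_sq_mul_sq S (fun i => v i) (fun i => x i)
    rw [hC, hA, hB] at this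
    simpa using this
  -- a ≤ 1 - b/N
  have hkey : (v i0) ^ 2 * (N:ℝ) ≤ (N:ℝ) - (x i0) ^ 2 := by nlinarith [hCS]
  -- bound the sums
  have hvb : ∑ i, lam i * (v i) ^ 2 ≤ lam₁ * (v i0) ^ 2 + lam₂ * (1 - (v i0) ^ 2) := by
    rw [split (fun i => lam i * (v i) ^ 2), hlam0]
    have h : ∑ i ∈ S, lam i * (v i) ^ 2 ≤ lam₂ * ∑ i ∈ S, (v i) ^ 2 := by
      rw [Finset.mul_sum]
      exact Finset.sum_le_sum fun i hi =>
        mul_le_mul_of_nonneg_right (hlam2 i (Finset.ne_of_mem_erase hi)) (sq_nonneg _)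
    rw [hA] at h; linarith
  have hxb : lam₁ * (x i0) ^ 2 + lamN * ((N:ℝ) - (x i0) ^ 2) ≤ ∑ i, lam i * (x i) ^ 2 := by
    rw [split (fun i => lam i * (x i) ^ 2), hlam0]
    have h : lamN * ∑ i ∈ S, (x i) ^ 2 ≤ ∑ i ∈ S, lam i * (x i) ^ 2 := by
      rw [Finset.mul_sum]
      exact Finset.sum_le_sum fun i _ =>
        mul_le_mul_of_nonneg_right (hlamN i) (sq_nonneg _)
    rw [hB] at h; linarith
  -- m² = x₀²/N
  have hm : ((x i0) / Real.sqrt N) ^ 2 = (x i0) ^ 2 / N := by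
    rw [div_pow, Real.sq_sqrt (by positivity)]
  rw [hm]
  have hNne : (N:ℝ) ≠ 0 := ne_of_gt hNpos
  set m2 : ℝ := (x i0) ^ 2 / N with hm2
  have hb : (x i0) ^ 2 = m2 * N := by rw [hm2, div_mul_cancel₀ _ hNne]
  have ha : (v i0) ^ 2 ≤ 1 - m2 := by
    have h' : (v i0) ^ 2 * (N:ℝ) ≤ (1 - m2) * (N:ℝ) := by nlinarith [hkey]
    exact le_of_mul_le_mul_right h' hNpos
  have hxdiv : lam₁ * m2 + lamN * (1 - m2) ≤ (1 / (N:ℝ)) * ∑ i, lam i * (x i) ^ 2 := by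
    have := mul_le_mul_of_nonneg_left hxb (le_of_lt (show (0:ℝ) < 1/N by positivity))
    calc lam₁ * m2 + lamN * (1 - m2)
        = (1 / (N:ℝ)) * (lam₁ * (x i0) ^ 2 + lamN * ((N:ℝ) - (x i0) ^ 2)) := by
          rw [hb]; field_simp
      _ ≤ _ := this
  nlinarith [hvb, hxdiv, mul_le_mul_of_nonneg_left ha (sub_nonneg.mpr h2)]
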